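/- Let G be a connected locally finite simple graph, let x and y be adjacent vertices with d(x) ≤ d(y), and let σ be a coupling between μ_x and μ_y. Define B_σ : V(G) × V(G) → ℝ by B_σ(x,y) = 1 + 1/d(y); B_σ(u,u) = −1/d(y) for every u ∈ N[x] ∩ N[y] ; B_σ(u,v) = −σ(u,v)/L for every (u,v) ∈ N[x] × (N(y) \ N[x]); and B_σ(u,v) = 0 otherwise, where L = lcm(d(x), d(y)). Then B_σ is a *-coupling between m_x^0 and m_y^0. -/

import Mathlib

open scoped BigOperators

namespace LLY

variable {V : Type*}

/-- Degree of a vertex (as `Nat.card` of its neighbor set; agrees with the usual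
degree in a locally finite graph). -/
noncomputable def deg (G : SimpleGraph V) (u : V) : ℕ := Nat.card (G.neighborSet u)

/-- `G` is locally finite. -/
def LocFin (G : SimpleGraph V) : Prop := ∀ v : V, (G.neighborSet v).Finite

/-- `f` is 1-Lipschitz with respect to the graph distance of `G`. -/
def Lip1 (G : SimpleGraph V) (f : V → ℝ) : Prop :=
  ∀ a b : V, |f a - f b| ≤ (G.dist a b : ℝ)

/-- The (normalized) graph Laplacian `Δf(u) = (1/d(u)) ∑_{v ∈ N(u)} (f v - f u)`. -/
noncomputable def lap (G : SimpleGraph V) (f : V → ℝ) (u : V) : ℝ :=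
  (1 / (deg G u : ℝ)) * ∑ᶠ v ∈ G.neighborSet u, (f v - f u)

/-- The gradient `∇_{xy} f = (f x - f y)/d(x,y)`. -/
noncomputable def grad (G : SimpleGraph V) (f : V → ℝ) (x y : V) : ℝ :=
  (f x - f y) / (G.dist x y : ℝ)

/-- Lin–Lu–Yau curvature of the pair `{x,y}` (limit-free Münch–Wojciechowski form):
`κ(x,y) = inf { ∇_{xy} Δf : f 1-Lipschitz, ∇_{yx} f = 1 }`. -/
noncomputable def kappa (G : SimpleGraph V) (x y : V) : ℝ :=
  sInf {k : ℝ | ∃ f : V → ℝ, Lip1 G f ∧ grad G f y x = 1 ∧ k = grad G (lap G f) x y}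

end LLY

namespace LLY

variable {V : Type*}

/-- `c_x = lcm(d(x),d(y))/d(x)`. -/
noncomputable def cX (G : SimpleGraph V) (x y : V) : ℕ :=
  Nat.lcm (deg G x) (deg G y) / deg G x

/-- `c_y = lcm(d(x),d(y))/d(y)`. -/
noncomputable def cY (G : SimpleGraph V) (x y : V) : ℕ :=
  Nat.lcm (deg G x) (deg G y) / deg G y

open Classical in
/-- The mass distribution `μ_x`: `c_x - c_y` on `y` and on common neighbors of `x,y`,
`c_x` on `N(x) \ N[y]`, and `0` elsewhere. -/
noncomputable def muX (G : SimpleGraph V) (x y : V) (u : V) : ℤ :=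
  if u = y ∨ u ∈ G.neighborSet x ∩ G.neighborSet y then (cX G x y : ℤ) - (cY G x y : ℤ)
  else if u ∈ G.neighborSet x \ (G.neighborSet y ∪ {y}) then (cX G x y : ℤ)
  else 0

open Classical in
/-- The mass distribution `μ_y`: `c_y` on `N(y) \ N[x]` and `0` elsewhere. -/
noncomputable def muY (G : SimpleGraph V) (x y : V) (u : V) : ℤ :=
  if u ∈ G.neighborSet y \ (G.neighborSet x ∪ {x}) then (cY G x y : ℤ) else 0

/-- `σ` is a coupling between `μ_x` and `μ_y`: a finitely supported, nonnegative,
integer-valued map with the prescribed marginals. -/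
def IsCoupling (G : SimpleGraph V) (x y : V) (σ : V × V → ℤ) : Prop :=
  (Function.support σ).Finite ∧
  (∀ p : V × V, 0 ≤ σ p) ∧
  (∀ z : V, ∑ᶠ v : V, σ (z, v) = muX G x y z) ∧
  (∀ z : V, ∑ᶠ u : V, σ (u, z) = muY G x y z)

/-- The transportation cost `C(σ) = ∑_{u,v} σ(u,v) d(u,v)`. -/
noncomputable def cost (G : SimpleGraph V) (σ : V × V → ℤ) : ℝ :=
  ∑ᶠ p : V × V, (σ p : ℝ) * (G.dist p.1 p.2 : ℝ)

end LLY

namespace LLY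

variable {V : Type*}

open Classical in
/-- The idleness-0 random walk distribution at `x`: `m_x^0(u) = 1/d(x)` on `N(x)`. -/
noncomputable def m0 (G : SimpleGraph V) (x u : V) : ℝ :=
  if u ∈ G.neighborSet x then 1 / (deg G x : ℝ) else 0

/-- `B` is a `*`-coupling between `m_x^0` and `m_y^0`. -/
def IsStarCoupling (G : SimpleGraph V) (x y : V) (B : V × V → ℝ) : Prop :=
  (Function.support B).Finite ∧
  0 < B (x, y) ∧
  (∀ p : V × V, p ≠ (x, y) → B p ≤ 0) ∧
  (∑ᶠ p : V × V, B p) = 0 ∧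
  (∀ u : V, u ≠ x → ∑ᶠ v : V, B (u, v) = - m0 G x u) ∧
  (∀ v : V, v ≠ y → ∑ᶠ u : V, B (u, v) = - m0 G y v)

end LLY

namespace LLY

open Classical in
/-- The map `B_σ` built from a coupling `σ` between `μ_x` and `μ_y`:
`B_σ(x,y) = 1 + 1/d(y)`; `B_σ(u,u) = -1/d(y)` for `u ∈ N[x] ∩ N[y]`;
`B_σ(u,v) = -σ(u,v)/lcm(d(x),d(y))` for `(u,v) ∈ N[x] × (N(y) \ N[x])`; `0` otherwise. -/
noncomputable def Bsig {V : Type*} (G : SimpleGraph V) (x y : V) (σ : V × V → ℤ) :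
    V × V → ℝ := fun p =>
  if p = (x, y) then 1 + 1 / (deg G y : ℝ)
  else if p.1 = p.2 ∧ p.1 ∈ (G.neighborSet x ∪ {x}) ∩ (G.neighborSet y ∪ {y}) then
    -(1 / (deg G y : ℝ))
  else if p.1 ∈ G.neighborSet x ∪ {x} ∧ p.2 ∈ G.neighborSet y \ (G.neighborSet x ∪ {x}) then
    -((σ p : ℝ) / (Nat.lcm (deg G x) (deg G y) : ℝ))
  else 0

end LLY


namespace LLY

variable {V : Type*}

open Classical in
noncomputable def bb1 (G : SimpleGraph V) (x y : V) : V × V → ℝ :=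
  fun p => if p = (x, y) then 1 + 1 / (deg G y : ℝ) else 0

open Classical in
noncomputable def bb2 (G : SimpleGraph V) (x y : V) : V × V → ℝ :=
  fun p => if p.1 = p.2 ∧ p.1 ∈ (G.neighborSet x ∪ {x}) ∩ (G.neighborSet y ∪ {y}) then
    -(1 / (deg G y : ℝ)) else 0

noncomputable def bb3 (G : SimpleGraph V) (x y : V) (σ : V × V → ℤ) : V × V → ℝ :=
  fun p => -((σ p : ℝ) / (Nat.lcm (deg G x) (deg G y) : ℝ))

open Classical in
lemma Bsig_apply (G : SimpleGraph V) (x y : V) (σ : V × V → ℤ) (u v : V) :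
    Bsig G x y σ (u, v) =
      if (u, v) = (x, y) then 1 + 1 / (deg G y : ℝ)
      else if u = v ∧ u ∈ (G.neighborSet x ∪ {x}) ∩ (G.neighborSet y ∪ {y}) then
        -(1 / (deg G y : ℝ))
      else if u ∈ G.neighborSet x ∪ {x} ∧ v ∈ G.neighborSet y \ (G.neighborSet x ∪ {x}) then
        -((σ (u, v) : ℝ) / (Nat.lcm (deg G x) (deg G y) : ℝ))
      else 0 := rfl

open Classical in
lemma bb1_apply (G : SimpleGraph V) (x y : V) (u v : V) :
    bb1 G x y (u, v) = if (u, v) = (x, y) then 1 + 1 / (deg G y : ℝ) else 0 := rfl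

open Classical in
lemma bb2_apply (G : SimpleGraph V) (x y : V) (u v : V) :
    bb2 G x y (u, v) =
      if u = v ∧ u ∈ (G.neighborSet x ∪ {x}) ∩ (G.neighborSet y ∪ {y}) then
        -(1 / (deg G y : ℝ)) else 0 := rfl

lemma bb3_apply (G : SimpleGraph V) (x y : V) (σ : V × V → ℤ) (u v : V) :
    bb3 G x y σ (u, v) = -((σ (u, v) : ℝ) / (Nat.lcm (deg G x) (deg G y) : ℝ)) := rfl

end LLY

open LLY in
/-- If `σ` is a coupling between `μ_x` and `μ_y`, then `B_σ` is a
`*`-coupling between `m_x^0` and `m_y^0`. -/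
theorem Bsig_isStarCoupling {V : Type*} (G : SimpleGraph V)
    (hconn : G.Connected) (hfin : LocFin G) (x y : V) (hxy : G.Adj x y)
    (hdeg : deg G x ≤ deg G y) (σ : V × V → ℤ) (hσ : IsCoupling G x y σ) :
    IsStarCoupling G x y (Bsig G x y σ) := by
  classical
  obtain ⟨hSfin, hpos, hrowm, hcolm⟩ := hσ
  have hyNx : y ∈ G.neighborSet x := hxy
  have hxNy : x ∈ G.neighborSet y := hxy.symm
  have hxny : x ≠ y := hxy.ne
  have hxNx : x ∉ G.neighborSet x := fun h => G.irrefl h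
  have hyNy : y ∉ G.neighborSet y := fun h => G.irrefl h
  have hdx0 : deg G x ≠ 0 := by
    have h1 : Finite (G.neighborSet x) := (hfin x).to_subtype
    have h2 : Nonempty (G.neighborSet x) := ⟨⟨y, hyNx⟩⟩
    exact Nat.card_pos.ne'
  have hdy0 : deg G y ≠ 0 := by
    have h1 : Finite (G.neighborSet y) := (hfin y).to_subtype
    have h2 : Nonempty (G.neighborSet y) := ⟨⟨x, hxNy⟩⟩
    exact Nat.card_pos.ne'
  have hL0 : Nat.lcm (deg G x) (deg G y) ≠ 0 := Nat.lcm_ne_zero hdx0 hdy0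
  have hdxR : (deg G x : ℝ) ≠ 0 := Nat.cast_ne_zero.mpr hdx0
  have hdyR : (deg G y : ℝ) ≠ 0 := Nat.cast_ne_zero.mpr hdy0
  have hLR : ((Nat.lcm (deg G x) (deg G y) : ℕ) : ℝ) ≠ 0 := Nat.cast_ne_zero.mpr hL0
  have hcXmul : (cX G x y) * (deg G x) = Nat.lcm (deg G x) (deg G y) :=
    Nat.div_mul_cancel (Nat.dvd_lcm_left _ _)
  have hcYmul : (cY G x y) * (deg G y) = Nat.lcm (deg G x) (deg G y) :=
    Nat.div_mul_cancel (Nat.dvd_lcm_right _ _)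
  have hcXR : (cX G x y : ℝ) * (deg G x : ℝ) = (Nat.lcm (deg G x) (deg G y) : ℝ) := by
    exact_mod_cast hcXmul
  have hcYR : (cY G x y : ℝ) * (deg G y : ℝ) = (Nat.lcm (deg G x) (deg G y) : ℝ) := by
    exact_mod_cast hcYmul
  have hcXL : (cX G x y : ℝ) / (Nat.lcm (deg G x) (deg G y) : ℝ) = 1 / (deg G x : ℝ) := by
    rw [div_eq_div_iff hLR hdxR, one_mul]; exact hcXR
  have hcYL : (cY G x y : ℝ) / (Nat.lcm (deg G x) (deg G y) : ℝ) = 1 / (deg G y : ℝ) := by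
    rw [div_eq_div_iff hLR hdyR, one_mul]; exact hcYR
  -- `σ` vanishing facts
  have hrowfin : ∀ u : V, (Function.support fun v => σ (u, v)).Finite := by
    intro u
    apply (hSfin.image Prod.snd).subset
    intro v hv
    exact ⟨(u, v), hv, rfl⟩
  have hcolfin : ∀ v : V, (Function.support fun u => σ (u, v)).Finite := by
    intro v
    apply (hSfin.image Prod.fst).subset
    intro u hu
    exact ⟨(u, v), hu, rfl⟩
  have hz_row : ∀ u, muX G x y u = 0 → ∀ v, σ (u, v) = 0 := by
    intro u hmu v
    have h1 : σ (u, v) ≤ ∑ᶠ w, σ (u, w) :=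
      single_le_finsum v (hrowfin u) (fun j => hpos (u, j))
    rw [hrowm u, hmu] at h1
    exact le_antisymm h1 (hpos _)
  have hz_col : ∀ v, muY G x y v = 0 → ∀ u, σ (u, v) = 0 := by
    intro v hmu u
    have h1 : σ (u, v) ≤ ∑ᶠ w, σ (w, v) :=
      single_le_finsum u (hcolfin v) (fun j => hpos (j, v))
    rw [hcolm v, hmu] at h1
    exact le_antisymm h1 (hpos _)
  have hmuX0 : ∀ u, u ∉ G.neighborSet x → muX G x y u = 0 := by
    intro u hu
    unfold muX
    rw [if_neg, if_neg]
    · rintro ⟨h1, -⟩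
      exact hu h1
    · rintro (rfl | ⟨h1, -⟩)
      exacts [hu hyNx, hu h1]
  have hmuY0 : ∀ v, v ∉ G.neighborSet y \ (G.neighborSet x ∪ {x}) → muY G x y v = 0 := by
    intro v hv
    unfold muY
    rw [if_neg hv]
  have hσx : ∀ u v, u ∉ G.neighborSet x → σ (u, v) = 0 :=
    fun u v hu => hz_row u (hmuX0 u hu) v
  have hσy : ∀ u v, v ∉ G.neighborSet y \ (G.neighborSet x ∪ {x}) → σ (u, v) = 0 :=
    fun u v hv => hz_col v (hmuY0 v hv) u
  -- pointwise decomposition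
  have hBeq : ∀ p : V × V, Bsig G x y σ p = bb1 G x y p + bb2 G x y p + bb3 G x y σ p := by
    rintro ⟨u, v⟩
    rw [Bsig_apply, bb1_apply, bb2_apply, bb3_apply]
    by_cases h1 : (u, v) = (x, y)
    · rw [if_pos h1, if_pos h1]
      rw [Prod.mk.injEq] at h1
      obtain ⟨rfl, rfl⟩ := h1
      have hσuv : σ (u, v) = 0 := by
        apply hσy
        rintro ⟨h, -⟩
        exact G.irrefl h
      rw [if_neg (fun hc => hxny hc.1), hσuv]
      norm_num
    · rw [if_neg h1, if_neg h1]
      by_cases h2 : u = v ∧ u ∈ (G.neighborSet x ∪ {x}) ∩ (G.neighborSet y ∪ {y})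
      · have hσuv : σ (u, v) = 0 := by
          apply hσy
          rintro ⟨-, hc⟩
          exact hc (h2.1 ▸ h2.2.1)
        rw [if_pos h2, if_pos h2, hσuv]
        norm_num
      · rw [if_neg h2, if_neg h2]
        by_cases h3 : u ∈ G.neighborSet x ∪ {x} ∧
            v ∈ G.neighborSet y \ (G.neighborSet x ∪ {x})
        · rw [if_pos h3]
          ring
        · rw [if_neg h3]
          have hσuv : σ (u, v) = 0 := by
            by_cases hu : u ∈ G.neighborSet x ∪ {x}
            · exact hσy u v (fun hc => h3 ⟨hu, hc⟩)
            · exact hσx u v (fun hc => hu (Or.inl hc))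
          rw [hσuv]
          norm_num
  -- support finiteness
  have hb1fin : (Function.support (bb1 G x y)).Finite := by
    apply (Set.finite_singleton (x, y)).subset
    rintro ⟨u, v⟩ hp
    rw [Function.mem_support, bb1_apply] at hp
    rw [Set.mem_singleton_iff]
    by_contra hc
    exact hp (if_neg hc)
  have hb2fin : (Function.support (bb2 G x y)).Finite := by
    have hfinset : ((G.neighborSet x ∪ {x}) ∩ (G.neighborSet y ∪ {y}) : Set V).Finite :=
      Set.Finite.inter_of_left ((hfin x).union (Set.finite_singleton x)) _
    apply (hfinset.image (fun u => (u, u))).subset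
    rintro ⟨u, v⟩ hp
    rw [Function.mem_support, bb2_apply] at hp
    by_cases hc : u = v ∧ u ∈ (G.neighborSet x ∪ {x}) ∩ (G.neighborSet y ∪ {y})
    · exact ⟨u, hc.2, by rw [← hc.1]⟩
    · rw [if_neg hc] at hp
      exact absurd rfl hp
  have hb3fin : (Function.support (bb3 G x y σ)).Finite := by
    apply hSfin.subset
    intro p hp
    rw [Function.mem_support, bb3] at hp
    rw [Function.mem_support]
    intro h0
    apply hp
    rw [h0]
    norm_num
  have hBfin : (Function.support (Bsig G x y σ)).Finite := by
    apply ((hb1fin.union hb2fin).union hb3fin).subset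
    intro p hp
    rw [Function.mem_support, hBeq p] at hp
    by_contra hc
    simp only [Set.mem_union, Function.mem_support, not_or, not_not] at hc
    rw [hc.1.1, hc.1.2, hc.2, add_zero, add_zero] at hp
    exact hp rfl
  -- positivity / nonpositivity
  have hpos_xy : 0 < Bsig G x y σ (x, y) := by
    rw [Bsig_apply, if_pos rfl]
    have h0 : (0:ℝ) ≤ 1 / (deg G y : ℝ) := by positivity
    linarith
  have hnonpos : ∀ p : V × V, p ≠ (x, y) → Bsig G x y σ p ≤ 0 := by
    rintro ⟨u, v⟩ hp
    rw [Bsig_apply, if_neg hp]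
    split_ifs with h2 h3
    · have h0 : (0:ℝ) ≤ 1 / (deg G y : ℝ) := by positivity
      linarith
    · have h0 : (0:ℝ) ≤ (σ (u, v) : ℝ) := by exact_mod_cast hpos (u, v)
      have hL' : (0:ℝ) ≤ (Nat.lcm (deg G x) (deg G y) : ℝ) := Nat.cast_nonneg _
      have := div_nonneg h0 hL'
      linarith
    · exact le_refl 0
  -- row sums of the pieces
  have hb1row : ∀ u, (Function.support fun v => bb1 G x y (u, v)).Finite := by
    intro u
    apply (Set.finite_singleton y).subset
    intro v hv
    rw [Function.mem_support, bb1_apply] at hv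
    rw [Set.mem_singleton_iff]
    by_contra hc
    apply hv
    rw [if_neg]
    intro h
    rw [Prod.mk.injEq] at h
    exact hc h.2
  have hb2row : ∀ u, (Function.support fun v => bb2 G x y (u, v)).Finite := by
    intro u
    apply (Set.finite_singleton u).subset
    intro v hv
    rw [Function.mem_support, bb2_apply] at hv
    rw [Set.mem_singleton_iff]
    by_contra hc
    apply hv
    rw [if_neg]
    rintro ⟨h, -⟩
    exact hc h.symm
  have hb3rowZ : ∀ u, (Function.support fun v => ((σ (u, v) : ℤ) : ℝ)).Finite := by
    intro u
    apply (hrowfin u).subset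
    intro v hv
    rw [Function.mem_support] at hv ⊢
    exact_mod_cast hv
  have hb3row : ∀ u, (Function.support fun v => bb3 G x y σ (u, v)).Finite := by
    intro u
    apply (hb3rowZ u).subset
    intro v hv
    rw [Function.mem_support, bb3_apply] at hv
    rw [Function.mem_support]
    intro h
    apply hv
    rw [h]
    norm_num
  have hr1 : ∀ u, ∑ᶠ v, bb1 G x y (u, v) =
      if u = x then 1 + 1 / (deg G y : ℝ) else 0 := by
    intro u
    by_cases hu : u = x
    · rw [if_pos hu]
      have h0 : ∀ v, v ≠ y → bb1 G x y (u, v) = 0 := by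
        intro v hv
        rw [bb1_apply, if_neg]
        intro h
        rw [Prod.mk.injEq] at h
        exact hv h.2
      rw [finsum_eq_single _ y h0, bb1_apply, if_pos (by rw [hu])]
    · rw [if_neg hu]
      have h0 : ∀ v, bb1 G x y (u, v) = 0 := by
        intro v
        rw [bb1_apply, if_neg]
        intro h
        rw [Prod.mk.injEq] at h
        exact hu h.1
      calc ∑ᶠ v, bb1 G x y (u, v) = ∑ᶠ _ : V, (0:ℝ) := finsum_congr h0
        _ = 0 := finsum_zero
  have hr2 : ∀ u, ∑ᶠ v, bb2 G x y (u, v) =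
      if u ∈ (G.neighborSet x ∪ {x}) ∩ (G.neighborSet y ∪ {y}) then
        -(1 / (deg G y : ℝ)) else 0 := by
    intro u
    have h0 : ∀ v, v ≠ u → bb2 G x y (u, v) = 0 := by
      intro v hv
      rw [bb2_apply, if_neg]
      rintro ⟨h, -⟩
      exact hv h.symm
    rw [finsum_eq_single _ u h0, bb2_apply]
    by_cases hu : u ∈ (G.neighborSet x ∪ {x}) ∩ (G.neighborSet y ∪ {y})
    · rw [if_pos ⟨rfl, hu⟩, if_pos hu]
    · rw [if_neg (fun hc => hu hc.2), if_neg hu]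
  have hcastrow : ∀ u, ∑ᶠ v, ((σ (u, v) : ℤ) : ℝ) = ((muX G x y u : ℤ) : ℝ) := by
    intro u
    have h := (Int.castAddHom ℝ).map_finsum (f := fun v => σ (u, v)) (hrowfin u)
    rw [hrowm u] at h
    simpa using h.symm
  have hr3 : ∀ u, ∑ᶠ v, bb3 G x y σ (u, v) =
      -(((muX G x y u : ℤ) : ℝ) / (Nat.lcm (deg G x) (deg G y) : ℝ)) := by
    intro u
    have e1 : ∀ v, bb3 G x y σ (u, v) =
        -(((σ (u, v) : ℤ) : ℝ) * ((Nat.lcm (deg G x) (deg G y) : ℝ))⁻¹) := by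
      intro v
      rw [bb3_apply, div_eq_mul_inv]
    calc ∑ᶠ v, bb3 G x y σ (u, v)
        = ∑ᶠ v, -(((σ (u, v) : ℤ) : ℝ) * ((Nat.lcm (deg G x) (deg G y) : ℝ))⁻¹) :=
          finsum_congr e1
      _ = -∑ᶠ v, (((σ (u, v) : ℤ) : ℝ) * ((Nat.lcm (deg G x) (deg G y) : ℝ))⁻¹) :=
          finsum_neg_distrib _
      _ = -((∑ᶠ v, ((σ (u, v) : ℤ) : ℝ)) * ((Nat.lcm (deg G x) (deg G y) : ℝ))⁻¹) := by
          rw [finsum_mul _ _]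
      _ = -(((muX G x y u : ℤ) : ℝ) * ((Nat.lcm (deg G x) (deg G y) : ℝ))⁻¹) := by
          rw [hcastrow u]
      _ = _ := by rw [div_eq_mul_inv]
  have hrowsum : ∀ u, ∑ᶠ v, Bsig G x y σ (u, v) =
      (if u = x then 1 + 1 / (deg G y : ℝ) else 0)
      + (if u ∈ (G.neighborSet x ∪ {x}) ∩ (G.neighborSet y ∪ {y}) then
          -(1 / (deg G y : ℝ)) else 0)
      + -(((muX G x y u : ℤ) : ℝ) / (Nat.lcm (deg G x) (deg G y) : ℝ)) := by
    intro u
    have h12fin : (Function.support fun v => bb1 G x y (u, v) + bb2 G x y (u, v)).Finite := by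
      apply ((hb1row u).union (hb2row u)).subset
      intro v hv
      rw [Function.mem_support] at hv
      by_contra hc
      simp only [Set.mem_union, Function.mem_support, not_or, not_not] at hc
      rw [hc.1, hc.2, add_zero] at hv
      exact hv rfl
    calc ∑ᶠ v, Bsig G x y σ (u, v)
        = ∑ᶠ v, (bb1 G x y (u, v) + bb2 G x y (u, v) + bb3 G x y σ (u, v)) :=
          finsum_congr (fun v => hBeq (u, v))
      _ = (∑ᶠ v, (bb1 G x y (u, v) + bb2 G x y (u, v))) + ∑ᶠ v, bb3 G x y σ (u, v) :=
          finsum_add_distrib h12fin (hb3row u)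
      _ = ((∑ᶠ v, bb1 G x y (u, v)) + ∑ᶠ v, bb2 G x y (u, v)) + ∑ᶠ v, bb3 G x y σ (u, v) := by
          rw [finsum_add_distrib (hb1row u) (hb2row u)]
      _ = _ := by rw [hr1 u, hr2 u, hr3 u]
  -- muX values
  have hmuX_y : muX G x y y = (cX G x y : ℤ) - (cY G x y : ℤ) := by
    unfold muX
    rw [if_pos (Or.inl rfl)]
  have hmuX_common : ∀ u, u ∈ G.neighborSet x → u ∈ G.neighborSet y →
      muX G x y u = (cX G x y : ℤ) - (cY G x y : ℤ) := by
    intro u h1 h2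
    unfold muX
    rw [if_pos (Or.inr ⟨h1, h2⟩)]
  have hmuX_only : ∀ u, u ∈ G.neighborSet x → u ∉ G.neighborSet y ∪ {y} →
      muX G x y u = (cX G x y : ℤ) := by
    intro u h1 h2
    unfold muX
    rw [if_neg, if_pos ⟨h1, h2⟩]
    rintro (rfl | ⟨-, hc⟩)
    · exact h2 (Or.inr rfl)
    · exact h2 (Or.inl hc)
  -- row marginals of B
  have hrow_ne : ∀ u, u ≠ x → ∑ᶠ v, Bsig G x y σ (u, v) = - m0 G x u := by
    intro u hu
    rw [hrowsum u, if_neg hu]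
    by_cases hN : u ∈ G.neighborSet x
    · have hm0 : m0 G x u = 1 / (deg G x : ℝ) := by
        unfold m0
        rw [if_pos hN]
      rw [hm0]
      by_cases hNy : u ∈ G.neighborSet y ∪ {y}
      · rw [if_pos ⟨Or.inl hN, hNy⟩]
        have hmu : muX G x y u = (cX G x y : ℤ) - (cY G x y : ℤ) := by
          rcases hNy with h | h
          · exact hmuX_common u hN h
          · rw [Set.mem_singleton_iff] at h
            rw [h]
            exact hmuX_y
        rw [hmu]
        push_cast
        rw [sub_div, hcXL, hcYL]
        ring
      · rw [if_neg (fun hc => hNy hc.2)]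
        rw [hmuX_only u hN hNy]
        push_cast
        rw [hcXL]
        ring
    · have hm0 : m0 G x u = 0 := by
        unfold m0
        rw [if_neg hN]
      rw [hm0]
      have hmem : u ∉ (G.neighborSet x ∪ {x}) ∩ (G.neighborSet y ∪ {y}) := by
        rintro ⟨h1 | h1, -⟩
        · exact hN h1
        · rw [Set.mem_singleton_iff] at h1
          exact hu h1
      rw [if_neg hmem, hmuX0 u hN]
      norm_num
  have hrow_x : ∑ᶠ v, Bsig G x y σ (x, v) = 1 := by
    rw [hrowsum x, if_pos rfl, if_pos ⟨Or.inr rfl, Or.inl hxNy⟩, hmuX0 x hxNx]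
    push_cast
    ring
  -- column sums of the pieces
  have hb1col : ∀ v, (Function.support fun u => bb1 G x y (u, v)).Finite := by
    intro v
    apply (Set.finite_singleton x).subset
    intro u hu
    rw [Function.mem_support, bb1_apply] at hu
    rw [Set.mem_singleton_iff]
    by_contra hc
    apply hu
    rw [if_neg]
    intro h
    rw [Prod.mk.injEq] at h
    exact hc h.1
  have hb2col : ∀ v, (Function.support fun u => bb2 G x y (u, v)).Finite := by
    intro v
    apply (Set.finite_singleton v).subset
    intro u hu
    rw [Function.mem_support, bb2_apply] at hu
    rw [Set.mem_singleton_iff]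
    by_contra hc
    apply hu
    rw [if_neg]
    rintro ⟨h, -⟩
    exact hc h
  have hb3colZ : ∀ v, (Function.support fun u => ((σ (u, v) : ℤ) : ℝ)).Finite := by
    intro v
    apply (hcolfin v).subset
    intro u hu
    rw [Function.mem_support] at hu ⊢
    exact_mod_cast hu
  have hb3col : ∀ v, (Function.support fun u => bb3 G x y σ (u, v)).Finite := by
    intro v
    apply (hb3colZ v).subset
    intro u hu
    rw [Function.mem_support, bb3_apply] at hu
    rw [Function.mem_support]
    intro h
    apply hu
    rw [h]
    norm_num
  have hc1 : ∀ v, ∑ᶠ u, bb1 G x y (u, v) =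
      if v = y then 1 + 1 / (deg G y : ℝ) else 0 := by
    intro v
    by_cases hv : v = y
    · rw [if_pos hv]
      have h0 : ∀ u, u ≠ x → bb1 G x y (u, v) = 0 := by
        intro u hu
        rw [bb1_apply, if_neg]
        intro h
        rw [Prod.mk.injEq] at h
        exact hu h.1
      rw [finsum_eq_single _ x h0, bb1_apply, if_pos (by rw [hv])]
    · rw [if_neg hv]
      have h0 : ∀ u, bb1 G x y (u, v) = 0 := by
        intro u
        rw [bb1_apply, if_neg]
        intro h
        rw [Prod.mk.injEq] at h
        exact hv h.2
      calc ∑ᶠ u, bb1 G x y (u, v) = ∑ᶠ _ : V, (0:ℝ) := finsum_congr h0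
        _ = 0 := finsum_zero
  have hc2 : ∀ v, ∑ᶠ u, bb2 G x y (u, v) =
      if v ∈ (G.neighborSet x ∪ {x}) ∩ (G.neighborSet y ∪ {y}) then
        -(1 / (deg G y : ℝ)) else 0 := by
    intro v
    have h0 : ∀ u, u ≠ v → bb2 G x y (u, v) = 0 := by
      intro u hu
      rw [bb2_apply, if_neg]
      rintro ⟨h, -⟩
      exact hu h
    rw [finsum_eq_single _ v h0, bb2_apply]
    by_cases hv : v ∈ (G.neighborSet x ∪ {x}) ∩ (G.neighborSet y ∪ {y})
    · rw [if_pos ⟨rfl, hv⟩, if_pos hv]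
    · rw [if_neg (fun hc => hv hc.2), if_neg hv]
  have hcastcol : ∀ v, ∑ᶠ u, ((σ (u, v) : ℤ) : ℝ) = ((muY G x y v : ℤ) : ℝ) := by
    intro v
    have h := (Int.castAddHom ℝ).map_finsum (f := fun u => σ (u, v)) (hcolfin v)
    rw [hcolm v] at h
    simpa using h.symm
  have hc3 : ∀ v, ∑ᶠ u, bb3 G x y σ (u, v) =
      -(((muY G x y v : ℤ) : ℝ) / (Nat.lcm (deg G x) (deg G y) : ℝ)) := by
    intro v
    have e1 : ∀ u, bb3 G x y σ (u, v) =
        -(((σ (u, v) : ℤ) : ℝ) * ((Nat.lcm (deg G x) (deg G y) : ℝ))⁻¹) := by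
      intro u
      rw [bb3_apply, div_eq_mul_inv]
    calc ∑ᶠ u, bb3 G x y σ (u, v)
        = ∑ᶠ u, -(((σ (u, v) : ℤ) : ℝ) * ((Nat.lcm (deg G x) (deg G y) : ℝ))⁻¹) :=
          finsum_congr e1
      _ = -∑ᶠ u, (((σ (u, v) : ℤ) : ℝ) * ((Nat.lcm (deg G x) (deg G y) : ℝ))⁻¹) :=
          finsum_neg_distrib _
      _ = -((∑ᶠ u, ((σ (u, v) : ℤ) : ℝ)) * ((Nat.lcm (deg G x) (deg G y) : ℝ))⁻¹) := by
          rw [finsum_mul _ _]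
      _ = -(((muY G x y v : ℤ) : ℝ) * ((Nat.lcm (deg G x) (deg G y) : ℝ))⁻¹) := by
          rw [hcastcol v]
      _ = _ := by rw [div_eq_mul_inv]
  have hcolsum : ∀ v, ∑ᶠ u, Bsig G x y σ (u, v) =
      (if v = y then 1 + 1 / (deg G y : ℝ) else 0)
      + (if v ∈ (G.neighborSet x ∪ {x}) ∩ (G.neighborSet y ∪ {y}) then
          -(1 / (deg G y : ℝ)) else 0)
      + -(((muY G x y v : ℤ) : ℝ) / (Nat.lcm (deg G x) (deg G y) : ℝ)) := by
    intro v
    have h12fin : (Function.support fun u => bb1 G x y (u, v) + bb2 G x y (u, v)).Finite := by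
      apply ((hb1col v).union (hb2col v)).subset
      intro u hu
      rw [Function.mem_support] at hu
      by_contra hc
      simp only [Set.mem_union, Function.mem_support, not_or, not_not] at hc
      rw [hc.1, hc.2, add_zero] at hu
      exact hu rfl
    calc ∑ᶠ u, Bsig G x y σ (u, v)
        = ∑ᶠ u, (bb1 G x y (u, v) + bb2 G x y (u, v) + bb3 G x y σ (u, v)) :=
          finsum_congr (fun u => hBeq (u, v))
      _ = (∑ᶠ u, (bb1 G x y (u, v) + bb2 G x y (u, v))) + ∑ᶠ u, bb3 G x y σ (u, v) :=
          finsum_add_distrib h12fin (hb3col v)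
      _ = ((∑ᶠ u, bb1 G x y (u, v)) + ∑ᶠ u, bb2 G x y (u, v)) + ∑ᶠ u, bb3 G x y σ (u, v) := by
          rw [finsum_add_distrib (hb1col v) (hb2col v)]
      _ = _ := by rw [hc1 v, hc2 v, hc3 v]
  have hcol_ne : ∀ v, v ≠ y → ∑ᶠ u, Bsig G x y σ (u, v) = - m0 G y v := by
    intro v hv
    rw [hcolsum v, if_neg hv]
    by_cases hN : v ∈ G.neighborSet y
    · have hm0 : m0 G y v = 1 / (deg G y : ℝ) := by
        unfold m0
        rw [if_pos hN]
      rw [hm0]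
      by_cases hNx : v ∈ G.neighborSet x ∪ {x}
      · rw [if_pos ⟨hNx, Or.inl hN⟩]
        rw [hmuY0 v (fun hc => hc.2 hNx)]
        push_cast
        ring
      · rw [if_neg (fun hc => hNx hc.1)]
        have hmu : muY G x y v = (cY G x y : ℤ) := by
          unfold muY
          rw [if_pos ⟨hN, hNx⟩]
        rw [hmu]
        push_cast
        rw [hcYL]
        ring
    · have hm0 : m0 G y v = 0 := by
        unfold m0
        rw [if_neg hN]
      rw [hm0]
      have hmem : v ∉ (G.neighborSet x ∪ {x}) ∩ (G.neighborSet y ∪ {y}) := by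
        rintro ⟨-, h2 | h2⟩
        · exact hN h2
        · rw [Set.mem_singleton_iff] at h2
          exact hv h2
      rw [if_neg hmem, hmuY0 v (fun hc => hN hc.1)]
      norm_num
  -- total sum
  have htotal : ∑ᶠ p : V × V, Bsig G x y σ p = 0 := by
    rw [finsum_curry _ hBfin]
    have hg : ∀ u, ∑ᶠ v, Bsig G x y σ (u, v) =
        (if u = x then (1:ℝ) else 0) + -(m0 G x u) := by
      intro u
      by_cases hu : u = x
      · subst hu
        rw [hrow_x, if_pos rfl]
        have hm0 : m0 G u u = 0 := by
          unfold m0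
          rw [if_neg hxNx]
        rw [hm0]
        ring
      · rw [hrow_ne u hu, if_neg hu]
        ring
    rw [finsum_congr hg]
    have hfin1 : (Function.support fun u => if u = x then (1:ℝ) else 0).Finite := by
      apply (Set.finite_singleton x).subset
      intro u hu
      rw [Function.mem_support] at hu
      rw [Set.mem_singleton_iff]
      by_contra hc
      exact hu (if_neg hc)
    have hm0fin : (Function.support fun u => -(m0 G x u)).Finite := by
      apply (hfin x).subset
      intro u hu
      rw [Function.mem_support] at hu
      by_contra hc
      apply hu
      have : m0 G x u = 0 := by
        unfold m0
        rw [if_neg hc]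
      rw [this]
      norm_num
    rw [finsum_add_distrib hfin1 hm0fin]
    have h1 : ∑ᶠ u, (if u = x then (1:ℝ) else 0) = 1 := by
      rw [finsum_eq_single _ x (fun u hu => if_neg hu), if_pos rfl]
    have hcard : (hfin x).toFinset.card = deg G x := by
      unfold deg
      rw [Nat.card_coe_set_eq, Set.ncard_eq_toFinset_card _ (hfin x)]
    have h3 : ∑ᶠ u, m0 G x u = 1 := by
      have hss : Function.support (m0 G x) ⊆ ↑(hfin x).toFinset := by
        intro u hu
        rw [Function.mem_support] at hu
        rw [Set.Finite.coe_toFinset]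
        by_contra hc
        apply hu
        unfold m0
        rw [if_neg hc]
      rw [finsum_eq_finset_sum_of_support_subset _ hss]
      have he : ∀ u ∈ (hfin x).toFinset, m0 G x u = 1 / (deg G x : ℝ) := by
        intro u hu
        rw [Set.Finite.mem_toFinset] at hu
        unfold m0
        rw [if_pos hu]
      rw [Finset.sum_congr rfl he, Finset.sum_const, hcard, nsmul_eq_mul]
      field_simp
    have h2 : ∑ᶠ u, -(m0 G x u) = -1 := by
      rw [finsum_neg_distrib, h3]
    rw [h1, h2]
    ring
  exact ⟨hBfin, hpos_xy, hnonpos, htotal, hrow_ne, hcol_ne⟩
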